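/- Suppose L is a metric flag labeled triangulation of the 2-sphere. Then every Euclidean 4-circuit C of L is a full subcomplex of L: neither pair of opposite vertices of C is joined by an edge of L, and no three vertices of C span a 2-simplex of L. -/

import Mathlib

open Geometry

/-- The ambient space for our simplicial complexes. -/
abbrev E3 : Type := EuclideanSpace ℝ (Fin 3)

noncomputable instance : DecidableEq E3 := Classical.decEq _

namespace CoxOrb

variable (L : SimplicialComplex ℝ E3) (m : E3 → E3 → ℕ)

/-- `L` is a labeled triangulation of the 2-sphere with edge labeling `m`:
`L` is finite, its underlying space is homeomorphic to the 2-sphere, and `m`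
is symmetric with `m s t ≥ 2` on every edge `{s, t}` of `L`. -/
structure IsLabeledS2 : Prop where
  finite : L.faces.Finite
  sphere : Nonempty (L.space ≃ₜ (Metric.sphere (0 : E3) 1 : Set E3))
  symm : ∀ s t : E3, m s t = m t s
  two_le : ∀ s t : E3, s ≠ t → ({s, t} : Finset E3) ∈ L.faces → 2 ≤ m s t

/-- `L` with labeling `m` is metric flag: three pairwise-joined vertices span a
2-simplex iff the corresponding angle sum `π/m_st + π/m_tu + π/m_us` exceeds `π`. -/
def MetricFlag : Prop :=
  ∀ s t u : E3, s ≠ t → t ≠ u → s ≠ u →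
    ({s, t} : Finset E3) ∈ L.faces → ({t, u} : Finset E3) ∈ L.faces →
    ({s, u} : Finset E3) ∈ L.faces →
    (({s, t, u} : Finset E3) ∈ L.faces ↔
      1 / (m s t : ℝ) + 1 / (m t u : ℝ) + 1 / (m u s : ℝ) > 1)

/-- The link of a vertex `s`, as a set of faces of `L`. -/
def link (s : E3) : Set (Finset E3) :=
  {F | F ∈ L.faces ∧ s ∉ F ∧ insert s F ∈ L.faces}

/-- The closed star of a vertex `s`: all faces of `L` contained in some face
containing `s`. -/
def star (s : E3) : Set (Finset E3) :=
  {F | F ∈ L.faces ∧ ∃ G ∈ L.faces, s ∈ G ∧ F ⊆ G}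

/-- The vertices of the link of `s`. -/
def linkVerts (s : E3) : Set E3 :=
  {v | v ≠ s ∧ ({s, v} : Finset E3) ∈ L.faces}

/-- A set of faces `A` is a full subcomplex of `L`: every face of `L` all of
whose vertices are vertices of `A` belongs to `A`. -/
def IsFullSubcomplex (A : Set (Finset E3)) : Prop :=
  A ⊆ L.faces ∧ ∀ F ∈ L.faces, (∀ v ∈ F, ({v} : Finset E3) ∈ A) → F ∈ A

/-- `s` is a 3-Euclidean vertex of `L`: it has valence three and the labels on
the three edges of its link have reciprocals summing to one. -/
def IsThreeEuclidean (s : E3) : Prop :=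
  ({s} : Finset E3) ∈ L.faces ∧
  ∃ s₀ s₁ s₂ : E3, s₀ ≠ s₁ ∧ s₁ ≠ s₂ ∧ s₀ ≠ s₂ ∧
    linkVerts L s = {s₀, s₁, s₂} ∧
    1 / (m s₀ s₁ : ℝ) + 1 / (m s₁ s₂ : ℝ) + 1 / (m s₂ s₀ : ℝ) = 1

/-- `s` is a 4-Euclidean vertex of `L`: it has valence four, its link is the
4-circuit on `v 0, v 1, v 2, v 3` (in cyclic order), and the labels on the
edges of the link are all `2`. -/
def IsFourEuclidean (s : E3) : Prop :=
  ({s} : Finset E3) ∈ L.faces ∧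
  ∃ v : Fin 4 → E3, Function.Injective v ∧
    linkVerts L s = {v 0, v 1, v 2, v 3} ∧
    (∀ i : Fin 4, ({s, v i, v (i + 1)} : Finset E3) ∈ L.faces) ∧
    (∀ i : Fin 4, m (v i) (v (i + 1)) = 2)

/-- `L` is the boundary complex of a 3-simplex: four pairwise-joined vertices
spanning four 2-simplices. -/
def IsBoundaryOfThreeSimplex : Prop :=
  ∃ a b c d : E3, a ≠ b ∧ a ≠ c ∧ a ≠ d ∧ b ≠ c ∧ b ≠ d ∧ c ≠ d ∧
    (∀ v : E3, ({v} : Finset E3) ∈ L.faces ↔ v = a ∨ v = b ∨ v = c ∨ v = d) ∧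
    ({a, b, c} : Finset E3) ∈ L.faces ∧ ({a, b, d} : Finset E3) ∈ L.faces ∧
    ({a, c, d} : Finset E3) ∈ L.faces ∧ ({b, c, d} : Finset E3) ∈ L.faces

/-- `L` is the suspension of a 3-gon. -/
def IsSuspensionOfThreeGon : Prop :=
  ∃ t t' s₀ s₁ s₂ : E3, [t, t', s₀, s₁, s₂].Pairwise (· ≠ ·) ∧
    (∀ v : E3, ({v} : Finset E3) ∈ L.faces ↔ v = t ∨ v = t' ∨ v = s₀ ∨ v = s₁ ∨ v = s₂) ∧
    ({s₀, s₁} : Finset E3) ∈ L.faces ∧ ({s₁, s₂} : Finset E3) ∈ L.faces ∧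
    ({s₀, s₂} : Finset E3) ∈ L.faces ∧
    ({t, s₀} : Finset E3) ∈ L.faces ∧ ({t, s₁} : Finset E3) ∈ L.faces ∧
    ({t, s₂} : Finset E3) ∈ L.faces ∧
    ({t', s₀} : Finset E3) ∈ L.faces ∧ ({t', s₁} : Finset E3) ∈ L.faces ∧
    ({t', s₂} : Finset E3) ∈ L.faces ∧
    ({t, t'} : Finset E3) ∉ L.faces

/-- The simplicial join of the subcomplex `Z` with the two points `t, t'`. -/
def joinSusp (Z : Set (Finset E3)) (t t' : E3) : Set (Finset E3) :=
  Z ∪ {{t}, {t'}} ∪ ((fun F => insert t F) '' Z) ∪ ((fun F => insert t' F) '' Z)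

/-- `T` is the right-angled suspension in `L` of the subcomplex `Z` with
suspension points `t, t'` (not joined by an edge of `T`): every edge from a
suspension point to a vertex of `Z` is labeled `2`. -/
structure IsRASuspData (T Z : Set (Finset E3)) (t t' : E3) : Prop where
  subset : T ⊆ L.faces
  zsubset : Z ⊆ L.faces
  zdown : ∀ F ∈ Z, ∀ G : Finset E3, G ⊆ F → G.Nonempty → G ∈ Z
  znonempty : Z.Nonempty
  tne : t ≠ t'
  t_notin : ∀ F ∈ Z, t ∉ F
  t'_notin : ∀ F ∈ Z, t' ∉ F
  labels : ∀ v : E3, ({v} : Finset E3) ∈ Z → m t v = 2 ∧ m t' v = 2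
  eq : T = joinSusp Z t t'

/-- `T` is a right-angled suspension in `L`. -/
def IsRASusp (T : Set (Finset E3)) : Prop :=
  ∃ Z t t', IsRASuspData L m T Z t t'

/-- The base `Z` of the suspension is neither a single vertex nor a single
edge, so that the suspension is infinite. -/
def InfiniteBase (Z : Set (Finset E3)) : Prop :=
  (¬ ∃ v : E3, Z = {({v} : Finset E3)}) ∧
  (¬ ∃ u v : E3, u ≠ v ∧ Z = {({u} : Finset E3), ({v} : Finset E3), ({u, v} : Finset E3)})

/-- `T` is an infinite, maximal right-angled suspension in `L`: it is an
RA-suspension of a full subcomplex which is neither a vertex nor an edge, and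
`T` is not properly contained in another RA-suspension. -/
def IsInfMaxRASusp (T : Set (Finset E3)) : Prop :=
  (∃ Z t t', IsRASuspData L m T Z t t' ∧ InfiniteBase Z ∧ IsFullSubcomplex L Z) ∧
  ∀ T', IsRASusp L m T' → T ⊆ T' → T = T'

/-- `v 0, v 1, v 2, v 3` (in cyclic order) form a Euclidean 4-circuit of `L`:
all four edge labels are `2` and the circuit is not the boundary of the union
of two 2-simplices of `L` sharing an edge. -/
def IsEuclidean4Circuit (v : Fin 4 → E3) : Prop :=
  Function.Injective v ∧
  (∀ i : Fin 4, ({v i, v (i + 1)} : Finset E3) ∈ L.faces) ∧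
  (∀ i : Fin 4, m (v i) (v (i + 1)) = 2) ∧
  ¬ ((({v 0, v 1, v 2} : Finset E3) ∈ L.faces ∧ ({v 0, v 2, v 3} : Finset E3) ∈ L.faces) ∨
     (({v 1, v 2, v 3} : Finset E3) ∈ L.faces ∧ ({v 0, v 1, v 3} : Finset E3) ∈ L.faces))

/-- The subcomplex consisting of the vertices and edges of the 4-circuit `v`. -/
def circuitComplex (v : Fin 4 → E3) : Set (Finset E3) :=
  {F | (∃ i : Fin 4, F = {v i}) ∨ (∃ i : Fin 4, F = {v i, v (i + 1)})}

/-- `T` is the right-angled cone on a Euclidean 4-circuit: the closed star of a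
vertex `c` of valence four whose link is a Euclidean 4-circuit, all four edges
containing `c` being labeled `2`. -/
def IsRAConeOn4Circuit (T : Set (Finset E3)) : Prop :=
  ∃ (c : E3) (v : Fin 4 → E3), IsEuclidean4Circuit L m v ∧
    linkVerts L c = {v 0, v 1, v 2, v 3} ∧
    (∀ i : Fin 4, ({c, v i, v (i + 1)} : Finset E3) ∈ L.faces) ∧
    (∀ i : Fin 4, m c (v i) = 2) ∧
    T = star L c

/-- The generating relation for Seifert subcomplexes: two infinite, maximal
RA-suspensions whose intersection is a Euclidean 4-circuit. -/
def SeifertRel (S S' : Set (Finset E3)) : Prop :=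
  IsInfMaxRASusp L m S ∧ IsInfMaxRASusp L m S' ∧
  ∃ v : Fin 4 → E3, IsEuclidean4Circuit L m v ∧ S ∩ S' = circuitComplex v

/-- `D` is a Seifert subcomplex of `L`: the union of the members of an
equivalence class of infinite, maximal RA-suspensions under the equivalence
relation generated by `SeifertRel`. -/
def IsSeifertSubcomplex (D : Set (Finset E3)) : Prop :=
  ∃ S₀, IsInfMaxRASusp L m S₀ ∧
    D = ⋃₀ {S | IsInfMaxRASusp L m S ∧ Relation.EqvGen (SeifertRel L m) S₀ S}

end CoxOrb

open CoxOrb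

/-- Every Euclidean 4-circuit of a metric flag labeled triangulation of the
2-sphere is a full subcomplex: neither pair of opposite vertices spans an edge
of `L`, and no three of its vertices span a 2-simplex of `L`. -/
theorem euclidean4Circuit_full
    (L : SimplicialComplex ℝ E3) (m : E3 → E3 → ℕ)
    (hL : IsLabeledS2 L m) (hflag : MetricFlag L m)
    (v : Fin 4 → E3) (hv : IsEuclidean4Circuit L m v) :
    IsFullSubcomplex L (circuitComplex v) ∧
    ({v 0, v 2} : Finset E3) ∉ L.faces ∧ ({v 1, v 3} : Finset E3) ∉ L.faces ∧
    ∀ i j k : Fin 4, i ≠ j → j ≠ k → i ≠ k →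
      ({v i, v j, v k} : Finset E3) ∉ L.faces := by

  obtain ⟨hinj, hedge, hlab, hnot⟩ := hv
  have vne : ∀ i j : Fin 4, i ≠ j → v i ≠ v j := fun i j hij h => hij (hinj h)
  have e01 : ({v 0, v 1} : Finset E3) ∈ L.faces := hedge 0
  have e12 : ({v 1, v 2} : Finset E3) ∈ L.faces := hedge 1
  have e23 : ({v 2, v 3} : Finset E3) ∈ L.faces := hedge 2
  have e30 : ({v 3, v 0} : Finset E3) ∈ L.faces := hedge 3
  have e03 : ({v 0, v 3} : Finset E3) ∈ L.faces := by rwa [Finset.pair_comm] at e30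
  have l01 : m (v 0) (v 1) = 2 := hlab 0
  have l12 : m (v 1) (v 2) = 2 := hlab 1
  have l23 : m (v 2) (v 3) = 2 := hlab 2
  have l30 : m (v 3) (v 0) = 2 := hlab 3
  have pos : ∀ a b : E3, a ≠ b → ({a, b} : Finset E3) ∈ L.faces → (0 : ℝ) < 1 / (m a b : ℝ) := by
    intro a b hab h
    have h2 := hL.two_le a b hab h
    have : (0 : ℝ) < (m a b : ℝ) := by exact_mod_cast Nat.lt_of_lt_of_le (by norm_num) h2
    positivity
  have hd02 : ({v 0, v 2} : Finset E3) ∉ L.faces := by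
    intro h02
    have h20 : ({v 2, v 0} : Finset E3) ∈ L.faces := by rwa [Finset.pair_comm] at h02
    have p20 := pos (v 2) (v 0) (vne 2 0 (by decide)) h20
    have p02 := pos (v 0) (v 2) (vne 0 2 (by decide)) h02
    have t1 : ({v 0, v 1, v 2} : Finset E3) ∈ L.faces := by
      rw [hflag (v 0) (v 1) (v 2) (vne 0 1 (by decide)) (vne 1 2 (by decide))
        (vne 0 2 (by decide)) e01 e12 h02, l01, l12]
      push_cast; linarith
    have t2 : ({v 0, v 2, v 3} : Finset E3) ∈ L.faces := by
      rw [hflag (v 0) (v 2) (v 3) (vne 0 2 (by decide)) (vne 2 3 (by decide))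
        (vne 0 3 (by decide)) h02 e23 e03, l23, l30]
      push_cast; linarith
    exact hnot (Or.inl ⟨t1, t2⟩)
  have hd13 : ({v 1, v 3} : Finset E3) ∉ L.faces := by
    intro h13
    have h31 : ({v 3, v 1} : Finset E3) ∈ L.faces := by rwa [Finset.pair_comm] at h13
    have p31 := pos (v 3) (v 1) (vne 3 1 (by decide)) h31
    have p13 := pos (v 1) (v 3) (vne 1 3 (by decide)) h13
    have t1 : ({v 1, v 2, v 3} : Finset E3) ∈ L.faces := by
      rw [hflag (v 1) (v 2) (v 3) (vne 1 2 (by decide)) (vne 2 3 (by decide))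
        (vne 1 3 (by decide)) e12 e23 h13, l12, l23]
      push_cast; linarith
    have t2 : ({v 0, v 1, v 3} : Finset E3) ∈ L.faces := by
      rw [hflag (v 0) (v 1) (v 3) (vne 0 1 (by decide)) (vne 1 3 (by decide))
        (vne 0 3 (by decide)) e01 h13 e03, l01, l30]
      push_cast; linarith
    exact hnot (Or.inr ⟨t1, t2⟩)
  have htri : ∀ i j k : Fin 4, i ≠ j → j ≠ k → i ≠ k →
      ({v i, v j, v k} : Finset E3) ∉ L.faces := by
    intro i j k hij hjk hik
    have hcov : ({0, 2} : Finset (Fin 4)) ⊆ {i, j, k} ∨ ({1, 3} : Finset (Fin 4)) ⊆ {i, j, k} := by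
      revert hij hjk hik; revert i j k; decide
    intro hF
    have himg : ({v i, v j, v k} : Finset E3) = ({i, j, k} : Finset (Fin 4)).image v := by
      simp [Finset.image_insert]
    rcases hcov with h | h
    · apply hd02
      have h02 : ({v 0, v 2} : Finset E3) = ({0, 2} : Finset (Fin 4)).image v := by
        simp [Finset.image_insert]
      rw [h02]
      exact L.down_closed hF (himg ▸ Finset.image_subset_image h)
        ⟨v 0, by simp⟩
    · apply hd13
      have h13 : ({v 1, v 3} : Finset E3) = ({1, 3} : Finset (Fin 4)).image v := by
        simp [Finset.image_insert]
      rw [h13]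
      exact L.down_closed hF (himg ▸ Finset.image_subset_image h)
        ⟨v 1, by simp⟩
  have hcsub : circuitComplex v ⊆ L.faces := by
    rintro F (⟨i, rfl⟩ | ⟨i, rfl⟩)
    · exact L.down_closed (hedge i)
        (Finset.singleton_subset_iff.mpr (Finset.mem_insert_self _ _))
        (Finset.singleton_nonempty _)
    · exact hedge i
  refine ⟨⟨hcsub, ?_⟩, hd02, hd13, htri⟩
  intro F hF hA
  have hii : ∀ i : Fin 4, i ≠ i + 1 := by decide
  have hsub : ∀ x ∈ F, x = v 0 ∨ x = v 1 ∨ x = v 2 ∨ x = v 3 := by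
    intro x hx
    rcases hA x hx with ⟨i, hi⟩ | ⟨i, hi⟩
    · obtain rfl := Finset.singleton_inj.mp hi
      fin_cases i <;> tauto
    · exfalso
      have h1 : v i ∈ ({x} : Finset E3) := by rw [hi]; simp
      have h2 : v (i + 1) ∈ ({x} : Finset E3) := by rw [hi]; simp
      exact vne i (i + 1) (hii i)
        ((Finset.mem_singleton.mp h1).trans (Finset.mem_singleton.mp h2).symm)
  have hFne : F.Nonempty := Finset.nonempty_iff_ne_empty.mpr (fun h => L.empty_notMem (h ▸ hF))
  have h02' : ¬ (v 0 ∈ F ∧ v 2 ∈ F) := fun ⟨a, b⟩ => hd02 (L.down_closed hF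
    (Finset.insert_subset_iff.mpr ⟨a, Finset.singleton_subset_iff.mpr b⟩)
    ⟨v 0, Finset.mem_insert_self _ _⟩)
  have h13' : ¬ (v 1 ∈ F ∧ v 3 ∈ F) := fun ⟨a, b⟩ => hd13 (L.down_closed hF
    (Finset.insert_subset_iff.mpr ⟨a, Finset.singleton_subset_iff.mpr b⟩)
    ⟨v 1, Finset.mem_insert_self _ _⟩)
  have pairCase : ∀ a b : Fin 4, v a ∈ F → v b ∈ F → (∀ x ∈ F, x = v a ∨ x = v b) →
      F = {v a, v b} := by
    intro a b ha hb hx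
    apply Finset.Subset.antisymm
    · intro x hxF; rcases hx x hxF with rfl | rfl <;> simp
    · exact Finset.insert_subset_iff.mpr ⟨ha, Finset.singleton_subset_iff.mpr hb⟩
  have singCase : ∀ a : Fin 4, v a ∈ F → (∀ x ∈ F, x = v a) → F = {v a} := by
    intro a ha hx
    exact Finset.eq_singleton_iff_unique_mem.mpr ⟨ha, hx⟩
  by_cases h0 : v 0 ∈ F <;> by_cases h1 : v 1 ∈ F <;> by_cases h2 : v 2 ∈ F <;>
    by_cases h3 : v 3 ∈ F
  · exact absurd ⟨h0, h2⟩ h02'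
  · exact absurd ⟨h0, h2⟩ h02'
  · exact absurd ⟨h1, h3⟩ h13'
  · exact Or.inr ⟨0, pairCase 0 1 h0 h1 (fun x hx => by
      rcases hsub x hx with rfl | rfl | rfl | rfl
      exacts [Or.inl rfl, Or.inr rfl, absurd hx h2, absurd hx h3])⟩
  · exact absurd ⟨h0, h2⟩ h02'
  · exact absurd ⟨h0, h2⟩ h02'
  · exact Or.inr ⟨3, pairCase 3 0 h3 h0 (fun x hx => by
      rcases hsub x hx with rfl | rfl | rfl | rfl
      exacts [Or.inr rfl, absurd hx h1, absurd hx h2, Or.inl rfl])⟩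
  · exact Or.inl ⟨0, singCase 0 h0 (fun x hx => by
      rcases hsub x hx with rfl | rfl | rfl | rfl
      exacts [rfl, absurd hx h1, absurd hx h2, absurd hx h3])⟩
  · exact absurd ⟨h1, h3⟩ h13'
  · exact Or.inr ⟨1, pairCase 1 2 h1 h2 (fun x hx => by
      rcases hsub x hx with rfl | rfl | rfl | rfl
      exacts [absurd hx h0, Or.inl rfl, Or.inr rfl, absurd hx h3])⟩
  · exact absurd ⟨h1, h3⟩ h13'
  · exact Or.inl ⟨1, singCase 1 h1 (fun x hx => by
      rcases hsub x hx with rfl | rfl | rfl | rfl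
      exacts [absurd hx h0, rfl, absurd hx h2, absurd hx h3])⟩
  · exact Or.inr ⟨2, pairCase 2 3 h2 h3 (fun x hx => by
      rcases hsub x hx with rfl | rfl | rfl | rfl
      exacts [absurd hx h0, absurd hx h1, Or.inl rfl, Or.inr rfl])⟩
  · exact Or.inl ⟨2, singCase 2 h2 (fun x hx => by
      rcases hsub x hx with rfl | rfl | rfl | rfl
      exacts [absurd hx h0, absurd hx h1, rfl, absurd hx h3])⟩
  · exact Or.inl ⟨3, singCase 3 h3 (fun x hx => by
      rcases hsub x hx with rfl | rfl | rfl | rfl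
      exacts [absurd hx h0, absurd hx h1, absurd hx h2, rfl])⟩
  · obtain ⟨x, hx⟩ := hFne
    rcases hsub x hx with rfl | rfl | rfl | rfl
    exacts [absurd hx h0, absurd hx h1, absurd hx h2, absurd hx h3]
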